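/- Let p be an odd prime, m ≥ 2, q = p^m, and 1 ≤ s < m. Then the q-cyclotomic cosets modulo q+1 of (p^s−1)/2 and (p^s+1)/2 are the two-element sets {(p^s−1)/2, q+1−(p^s−1)/2} and {(p^s+1)/2, q+1−(p^s+1)/2} respectively, and these two sets are disjoint. -/

import Mathlib

lemma coset_aux (q a : ℕ) (hq : 1 ≤ q) (ha0 : 0 < a) (ha : a < q + 1) :
    ∀ j : ℕ, a * q ^ j % (q + 1) = if j % 2 = 0 then a else q + 1 - a := by
  obtain ⟨k, rfl⟩ : ∃ k, q = k + 1 := ⟨q - 1, by omega⟩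
  have hsq : (k + 1) ^ 2 % (k + 2) = 1 := by
    have h : (k + 1) ^ 2 = k * (k + 2) + 1 := by ring
    rw [h, mul_comm k (k + 2), Nat.mul_add_mod, Nat.mod_eq_of_lt (by omega)]
  have h1 : (k + 1) ^ 2 ≡ 1 [MOD k + 2] := by
    unfold Nat.ModEq
    rw [hsq, Nat.mod_eq_of_lt (by omega)]
  intro j
  have h3 : a * (k + 1) ^ j = a * ((k + 1) ^ 2) ^ (j / 2) * (k + 1) ^ (j % 2) := by
    rw [mul_assoc, ← pow_mul, ← pow_add]
    congr 2
    omega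
  have h2 : a * ((k + 1) ^ 2) ^ (j / 2) * (k + 1) ^ (j % 2) ≡
      a * 1 ^ (j / 2) * (k + 1) ^ (j % 2) [MOD k + 2] :=
    Nat.ModEq.mul_right _ (Nat.ModEq.mul_left a (h1.pow (j / 2)))
  have hmod : a * (k + 1) ^ j % (k + 2) = a * (k + 1) ^ (j % 2) % (k + 2) := by
    rw [h3]
    simpa [Nat.ModEq] using h2
  rw [hmod]
  rcases Nat.mod_two_eq_zero_or_one j with h | h <;> rw [h] <;>
    simp only [pow_zero, pow_one, mul_one]
  · simp [Nat.mod_eq_of_lt ha]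
  · obtain ⟨t, rfl⟩ : ∃ t, a = t + 1 := ⟨a - 1, by omega⟩
    obtain ⟨d, hd⟩ : ∃ d, k + 1 = t + d := ⟨k + 1 - t, by omega⟩
    have hsub : k + 2 - (t + 1) = d := by omega
    have hk2 : k + 2 = t + d + 1 := by omega
    have heq : (t + 1) * (k + 1) = (k + 2) * t + d := by
      rw [hd, hk2]; ring
    rw [heq, Nat.mul_add_mod, Nat.mod_eq_of_lt (by omega)]
    simp [hsub]

lemma coset_eq (q a : ℕ) (hq : 1 ≤ q) (ha0 : 0 < a) (ha : a < q + 1) :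
    {x : ℕ | ∃ j : ℕ, x = a * q ^ j % (q + 1)} = {a, q + 1 - a} := by
  ext x
  simp only [Set.mem_setOf_eq, Set.mem_insert_iff, Set.mem_singleton_iff]
  constructor
  · rintro ⟨j, rfl⟩
    rw [coset_aux q a hq ha0 ha j]
    split <;> simp
  · rintro (rfl | rfl)
    · refine ⟨0, ?_⟩
      rw [coset_aux _ _ hq ha0 ha 0]
      norm_num
    · refine ⟨1, ?_⟩
      rw [coset_aux _ _ hq ha0 ha 1]
      norm_num

theorem stmt9 (p m s q : ℕ) (hp : p.Prime) (hpodd : Odd p) (hm : 2 ≤ m)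
    (hq : q = p ^ m) (hs1 : 1 ≤ s) (hs2 : s < m) :
    {x : ℕ | ∃ j : ℕ, x = (p ^ s - 1) / 2 * q ^ j % (q + 1)} =
      {(p ^ s - 1) / 2, q + 1 - (p ^ s - 1) / 2} ∧
    {x : ℕ | ∃ j : ℕ, x = (p ^ s + 1) / 2 * q ^ j % (q + 1)} =
      {(p ^ s + 1) / 2, q + 1 - (p ^ s + 1) / 2} ∧
    (p ^ s - 1) / 2 ≠ q + 1 - (p ^ s - 1) / 2 ∧
    (p ^ s + 1) / 2 ≠ q + 1 - (p ^ s + 1) / 2 ∧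
    Disjoint ({(p ^ s - 1) / 2, q + 1 - (p ^ s - 1) / 2} : Set ℕ)
      {(p ^ s + 1) / 2, q + 1 - (p ^ s + 1) / 2} := by
  have hp3 : 3 ≤ p := by
    rcases hp.two_le.lt_or_eq with h | h
    · omega
    · exfalso; rw [← h] at hpodd; exact (Nat.not_odd_iff_even.mpr (by decide)) hpodd
  obtain ⟨k, hk⟩ := hpodd.pow (n := s)
  have hps3 : 3 ≤ p ^ s :=
    le_trans (by simpa using hp3) (Nat.pow_le_pow_right (by omega) hs1)
  have hlt : p ^ s < q := by
    rw [hq]; exact Nat.pow_lt_pow_right (by omega) hs2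
  have hq1 : 1 ≤ q := by omega
  have ha : (p ^ s - 1) / 2 = k := by omega
  have hb : (p ^ s + 1) / 2 = k + 1 := by omega
  rw [ha, hb]
  refine ⟨coset_eq q k hq1 (by omega) (by omega),
    coset_eq q (k + 1) hq1 (by omega) (by omega), by omega, by omega, ?_⟩
  rw [Set.disjoint_left]
  rintro x (rfl | rfl) hx <;>
    simp only [Set.mem_insert_iff, Set.mem_singleton_iff] at hx <;> omega
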